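/- Let h = p + εq be a dual quaternion with p ≠ 0 satisfying the Study condition pq̄ + qp̄ = 0. The action of h on pure quaternions is the identity map (i.e., (p x p̄ + p q̄ − q p̄)/N(p) = x for all pure quaternions x) if and only if q = 0 and p is a nonzero real number. In other words, the kernel of the action homomorphism is the multiplicative group of nonzero reals. -/

import Mathlib

noncomputable section
open Polynomial

/-- The real quaternions ℍ. -/
abbrev Quat := Quaternion ℝ

/-- The dual quaternions 𝔻ℍ = ℍ ⊕ εℍ, realized as dual numbers over ℍ.
An element is a pair `(p, q)` representing `p + εq`. -/
abbrev DQ := DualNumber Quat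

/-- Conjugation of a dual quaternion `p + εq ↦ p̄ + εq̄`,
conjugating each quaternion part. -/
def dconj (h : DQ) : DQ := (star h.fst, star h.snd)

/-- The canonical ring homomorphism ℝ → 𝔻ℍ. -/
def realToDQ : ℝ →+* DQ := (TrivSqZeroExt.inlHom Quat Quat).comp (algebraMap ℝ Quat)

/-- Coefficientwise conjugate of a polynomial over 𝔻ℍ. -/
def pconj (C : DQ[X]) : DQ[X] := C.sum fun n a => Polynomial.C (dconj a) * X ^ n

/-- `C ∈ 𝔻ℍ[t]` is a motion polynomial if `C C̄ ∈ ℝ[t] \ {0}` and the leading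
coefficient of `C` is invertible. -/
def IsMotionPoly (C : DQ[X]) : Prop :=
  (∃ R : ℝ[X], R ≠ 0 ∧ C * pconj C = R.map realToDQ) ∧ IsUnit C.leadingCoeff

/-- The action of a dual quaternion `p + εq` (with `p ≠ 0` and satisfying the Study
condition) on a pure quaternion `x`:  `x ↦ (p x p̄ + p q̄ − q p̄)/N(p)`. -/
def act (p q x : Quat) : Quat :=
  (p * x * star p + p * star q - q * star p) * (p * star p)⁻¹

/-- The action of `p + εq` on pure quaternions is the identity iff
`q = 0` and `p` is a nonzero real number: the kernel of the action homomorphism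
is the multiplicative group ℝ*. -/
def qi : Quat := ⟨0,1,0,0⟩
def qj : Quat := ⟨0,0,1,0⟩

theorem stmt2 (p q : Quat) (hp : p ≠ 0) (hs : p * star q + q * star p = 0) :
    (∀ x : Quat, x.re = 0 → act p q x = x) ↔
      (q = 0 ∧ ∃ r : ℝ, r ≠ 0 ∧ p = (r : Quat)) := by
  have hN : p * star p ≠ 0 := mul_ne_zero hp (star_ne_zero.mpr hp)
  constructor
  · intro h
    have h0 := h 0 rfl
    simp only [act, mul_zero, zero_mul, zero_add] at h0
    have hq0 : p * star q - q * star p = 0 := by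
      calc p * star q - q * star p
          = (p * star q - q * star p) * (p * star p)⁻¹ * (p * star p) := by
            conv_rhs => rw [mul_assoc, inv_mul_cancel₀ hN, mul_one]
        _ = 0 := by rw [h0, zero_mul]
    have hq : q = 0 := by
      have h2 : p * star q + p * star q = 0 := by
        have e1 : q * star p = - (p * star q) := eq_neg_of_add_eq_zero_right hs
        rw [e1] at hq0
        linear_combination (norm := abel) hq0
      have : (2 : ℝ) • (p * star q) = 0 := by rw [two_smul]; exact h2
      have hpq : p * star q = 0 := by
        rcases smul_eq_zero.mp this with h | h
        · norm_num at h
        · exact h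
      have : star q = 0 := by
        rcases mul_eq_zero.mp hpq with h | h
        · exact absurd h hp
        · exact h
      simpa using congrArg star this
    have hc : ∀ x : Quat, x.re = 0 → p * x = x * p := by
      intro x hx
      have hx1 := h x hx
      simp only [act, hq, star_zero, mul_zero, zero_mul, add_zero, sub_zero] at hx1
      have h1 : p * x * star p = x * (p * star p) := by
        calc p * x * star p
            = p * x * star p * (p * star p)⁻¹ * (p * star p) := by
              conv_rhs => rw [mul_assoc, inv_mul_cancel₀ hN, mul_one]
          _ = x * (p * star p) := by rw [hx1]
      have h2 : p * x * star p = x * p * star p := by rw [h1, mul_assoc]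
      exact mul_right_cancel₀ (star_ne_zero.mpr hp) h2
    have hi := hc qi rfl
    have hj := hc qj rfl
    have hpr : p = ((p.re : ℝ) : Quat) := by
      rw [Quaternion.ext_iff] at hi hj ⊢
      simp [Quaternion.re_mul, Quaternion.imI_mul, Quaternion.imJ_mul,
        Quaternion.imK_mul] at hi hj ⊢
      simp [qi, qj] at hi hj ⊢
      refine ⟨?_, ?_, ?_⟩ <;> linarith [hi.1, hi.2, hj.1, hj.2]
    refine ⟨hq, p.re, ?_, hpr⟩
    intro h0
    apply hp
    rw [hpr, h0]; simp
  · rintro ⟨hq, r, hr, hpr⟩ x hx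
    subst hq hpr
    have hr' : (r : Quat) ≠ 0 := fun h0 => hr (Quaternion.coe_injective (h0.trans Quaternion.coe_zero.symm))
    simp only [act, star_zero, mul_zero, zero_mul, add_zero, sub_zero]
    have hst : star (r : Quat) = r := by simp
    rw [hst]
    have hcomm : (r : Quat) * x = x * r := (Quaternion.coe_commute r x).symm ▸ rfl
    rw [show (r:Quat) * x * r = x * ((r:Quat) * r) by
      rw [← mul_assoc, (Quaternion.coe_commute r x)]]
    rw [mul_assoc, mul_inv_cancel₀ (mul_ne_zero hr' hr'), mul_one]
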